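/- Let H be a real Hilbert space, p > 0, and P : H → H a bounded linear operator which is self-adjoint and positive with ‖P‖ ≤ 1 (so its spectrum lies in [0,1]). Define f : [0,1] → ℝ by f(λ) := (ln(e/λ))^{-p} for λ ∈ (0,1] and f(0) := 0, and let e₁ := f(P) ψ for some ψ ∈ H, where f(P) is given by the continuous functional calculus. Then there exists a constant C > 0, independent of k and ψ, such that for every integer k ≥ 2: (i) ‖(I − P)^k e₁‖ ≤ C ‖ψ‖ (ln(k+2))^{-p}, and (ii) ‖(I − P)^k P e₁‖ ≤ C ‖ψ‖ k^{-1} (ln(k+2))^{-p}. -/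

import Mathlib

namespace LogSourceAux

noncomputable def fn (p : ℝ) : ℝ → ℝ :=
  fun l : ℝ => if l = 0 then 0 else (Real.log (Real.exp 1 / l)) ^ (-p)

lemma fn_nonneg (p : ℝ) (l : ℝ) (hl0 : 0 ≤ l) (hl1 : l ≤ 1) : 0 ≤ fn p l := by
  unfold fn
  by_cases h : l = 0
  · simp [h]
  · have hlpos : 0 < l := lt_of_le_of_ne hl0 (Ne.symm h)
    have h1 : (1:ℝ) ≤ Real.exp 1 / l := by
      rw [le_div_iff₀ hlpos]
      have := Real.add_one_le_exp (1:ℝ)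
      nlinarith
    simp only [h, if_false]
    exact Real.rpow_nonneg (Real.log_nonneg h1) _

lemma exp_ge_pow (n : ℕ) (x : ℝ) (hx : 0 ≤ x) : (x / n) ^ n ≤ Real.exp x := by
  rcases Nat.eq_zero_or_pos n with h | h
  · simp only [h, pow_zero]
    exact Real.one_le_exp hx
  · have hn : (0:ℝ) < n := by exact_mod_cast h
    have h1 : x / n ≤ Real.exp (x / n) := by
      have := Real.add_one_le_exp (x / n)
      linarith
    calc (x / n) ^ n ≤ (Real.exp (x / n)) ^ n := by
          exact pow_le_pow_left₀ (by positivity) h1 n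
      _ = Real.exp x := by
          rw [← Real.exp_nat_mul]
          congr 1
          field_simp

lemma log_k2_ge_one (k : ℕ) (hk : 1 ≤ k) : (1:ℝ) ≤ Real.log (k + 2) := by
  rw [Real.le_log_iff_exp_le (by positivity)]
  have h1 : Real.exp 1 < 2.7182818286 := Real.exp_one_lt_d9
  have h2 : (1:ℝ) ≤ (k:ℝ) := by exact_mod_cast hk
  linarith

lemma scalar_one (p : ℝ) (hp : 0 < p) (n : ℕ) (hn1 : 1 ≤ n) (hpn : p ≤ n)
    (k : ℕ) (hk : 1 ≤ k) (l : ℝ) (hl0 : 0 ≤ l) (hl1 : l ≤ 1) :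
    (1 - l) ^ k * fn p l ≤ (3 * n : ℝ) ^ n * Real.log (k + 2) ^ (-p) := by
  have hk2 := log_k2_ge_one k hk
  set L := Real.log (k + 2) with hL
  have hLpos : 0 < L := lt_of_lt_of_le one_pos hk2
  have hn' : (1:ℝ) ≤ (n:ℝ) := by exact_mod_cast hn1
  have hC1 : (1:ℝ) ≤ (3 * n : ℝ) ^ n := one_le_pow₀ (by linarith)
  have hRHS : (0:ℝ) ≤ L ^ (-p) := Real.rpow_nonneg hLpos.le _
  rcases eq_or_lt_of_le hl0 with h0 | hlpos
  · simp [fn, ← h0]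
    positivity
  have hlne : l ≠ 0 := ne_of_gt hlpos
  have ha_def : Real.log (Real.exp 1 / l) = 1 - Real.log l := by
    rw [Real.log_div (Real.exp_ne_zero 1) hlne, Real.log_exp]
  set a := Real.log (Real.exp 1 / l) with ha
  have ha1 : (1:ℝ) ≤ a := by
    rw [ha_def]
    have := Real.log_nonpos hl0 hl1
    linarith
  have hapos : 0 < a := lt_of_lt_of_le one_pos ha1
  have hfn : fn p l = a ^ (-p) := by simp [fn, hlne, ha]
  rw [hfn]
  have hk' : (1:ℝ) ≤ (k:ℝ) := by exact_mod_cast hk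
  by_cases hcase : L ≤ a
  · have h1 : a ^ (-p) ≤ L ^ (-p) :=
      Real.rpow_le_rpow_of_nonpos hLpos hcase (by linarith)
    have h2 : (1 - l) ^ k ≤ 1 := pow_le_one₀ (by linarith) (by linarith)
    have h3 : (0:ℝ) ≤ a ^ (-p) := Real.rpow_nonneg hapos.le _
    calc (1 - l) ^ k * a ^ (-p) ≤ 1 * (L ^ (-p)) :=
          mul_le_mul h2 h1 h3 one_pos.le
      _ ≤ (3 * n : ℝ) ^ n * L ^ (-p) := by nlinarith
  · push_neg at hcase
    -- l = exp (1 - a)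
    have hl_eq : l = Real.exp (1 - a) := by
      have h1 : 1 - a = Real.log l := by rw [ha_def]; ring
      rw [h1, Real.exp_log hlpos]
    have hkl : (k:ℝ) * Real.exp (-a) ≤ (k:ℝ) * l := by
      have h1 : Real.exp (-a) ≤ Real.exp (1 - a) := Real.exp_le_exp.mpr (by linarith)
      rw [hl_eq]
      nlinarith [Real.exp_pos (-a)]
    have hklpos : (0:ℝ) < (k:ℝ) * l := by positivity
    -- monotonicity : L^p * exp(-L)^n ≤ a^p * exp(-a)^n
    have mono : L ^ p * Real.exp (-L) ^ n ≤ a ^ p * Real.exp (-a) ^ n := by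
      have h1 : L / a ≤ Real.exp (L - a) := by
        have h2 := Real.add_one_le_exp (L - a)
        rw [div_le_iff₀ hapos]
        nlinarith
      have h3 : (L / a) ^ p ≤ (L / a) ^ (n:ℝ) := by
        apply Real.rpow_le_rpow_of_exponent_le _ hpn
        rw [le_div_iff₀ hapos]
        linarith
      have h4 : (L / a) ^ (n:ℝ) ≤ Real.exp (L - a) ^ (n:ℝ) :=
        Real.rpow_le_rpow (by positivity) h1 (by positivity)
      have h5 : (L / a) ^ p ≤ Real.exp (L - a) ^ n := by
        calc (L / a) ^ p ≤ (L / a) ^ (n:ℝ) := h3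
          _ ≤ Real.exp (L - a) ^ (n:ℝ) := h4
          _ = Real.exp (L - a) ^ n := Real.rpow_natCast _ n
      have h6 : L ^ p = a ^ p * (L / a) ^ p := by
        rw [Real.div_rpow hLpos.le hapos.le]
        field_simp
      have h7 : Real.exp (L - a) ^ n * Real.exp (-L) ^ n = Real.exp (-a) ^ n := by
        rw [← mul_pow, ← Real.exp_add]
        congr 2
        ring
      have h8 : (0:ℝ) ≤ Real.exp (-L) ^ n := by positivity
      calc L ^ p * Real.exp (-L) ^ n = a ^ p * (L / a) ^ p * Real.exp (-L) ^ n := by rw [h6]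
        _ ≤ a ^ p * Real.exp (L - a) ^ n * Real.exp (-L) ^ n := by
            have h9 : (0:ℝ) ≤ a ^ p := Real.rpow_nonneg hapos.le p
            exact mul_le_mul_of_nonneg_right (mul_le_mul_of_nonneg_left h5 h9) h8
        _ = a ^ p * Real.exp (-a) ^ n := by rw [mul_assoc, h7]
    have hlow : (1:ℝ)/3 ≤ (k:ℝ) * Real.exp (-L) := by
      have h1 : Real.exp (-L) = ((k:ℝ) + 2)⁻¹ := by
        rw [Real.exp_neg, hL, Real.exp_log (by positivity)]
      have h2 : (1:ℝ)/3 ≤ (k:ℝ)/((k:ℝ)+2) := by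
        rw [div_le_div_iff₀ (by norm_num) (by positivity)]
        linarith
      rw [h1, ← div_eq_mul_inv]
      exact h2
    have hn0 : (0:ℝ) < (n:ℝ) := by exact_mod_cast hn1
    have hexp1 : ((k:ℝ) * Real.exp (-a) / n) ^ n ≤ Real.exp ((k:ℝ) * l) := by
      calc ((k:ℝ) * Real.exp (-a) / n) ^ n ≤ ((k:ℝ) * l / n) ^ n := by
            gcongr
        _ ≤ Real.exp ((k:ℝ) * l) := exp_ge_pow n _ hklpos.le
    have main : L ^ p * ((1:ℝ)/3 / n) ^ n ≤ a ^ p * ((k:ℝ) * Real.exp (-a) / n) ^ n := by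
      have hLp : (0:ℝ) ≤ L ^ p := Real.rpow_nonneg hLpos.le p
      calc L ^ p * ((1:ℝ)/3 / n) ^ n ≤ L ^ p * ((k:ℝ) * Real.exp (-L) / n) ^ n := by
            gcongr
        _ = L ^ p * Real.exp (-L) ^ n * ((k:ℝ)/n) ^ n := by
            rw [div_pow, div_pow, mul_pow]
            ring
        _ ≤ a ^ p * Real.exp (-a) ^ n * ((k:ℝ)/n) ^ n :=
            mul_le_mul_of_nonneg_right mono (by positivity)
        _ = a ^ p * ((k:ℝ) * Real.exp (-a) / n) ^ n := by
            rw [div_pow, div_pow, mul_pow]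
            ring
    have key : L ^ p ≤ (3 * n : ℝ) ^ n * (a ^ p * Real.exp ((k:ℝ) * l)) := by
      have e1 : ((1:ℝ)/3 / n) ^ n * (3 * n : ℝ) ^ n = 1 := by
        rw [← mul_pow]
        have : (1:ℝ)/3 / n * (3 * n) = 1 := by
          field_simp
        rw [this, one_pow]
      have hap : (0:ℝ) ≤ a ^ p := Real.rpow_nonneg hapos.le p
      calc L ^ p = L ^ p * (((1:ℝ)/3 / n) ^ n * (3 * n : ℝ) ^ n) := by rw [e1, mul_one]
        _ = (3 * n : ℝ) ^ n * (L ^ p * ((1:ℝ)/3 / n) ^ n) := by ring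
        _ ≤ (3 * n : ℝ) ^ n * (a ^ p * ((k:ℝ) * Real.exp (-a) / n) ^ n) := by
            exact mul_le_mul_of_nonneg_left main (by positivity)
        _ ≤ (3 * n : ℝ) ^ n * (a ^ p * Real.exp ((k:ℝ) * l)) := by
            exact mul_le_mul_of_nonneg_left (mul_le_mul_of_nonneg_left hexp1 hap) (by positivity)
    have hexp2 : (1 - l) ^ k ≤ Real.exp (-((k:ℝ) * l)) := by
      have h1 : 1 - l ≤ Real.exp (-l) := by
        have := Real.add_one_le_exp (-l)
        linarith
      calc (1 - l) ^ k ≤ Real.exp (-l) ^ k := pow_le_pow_left₀ (by linarith) h1 k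
        _ = Real.exp (-((k:ℝ) * l)) := by
            rw [← Real.exp_nat_mul]
            congr 1
            ring
    have hGoal2 : Real.exp (-((k:ℝ) * l)) * a ^ (-p) ≤ (3 * n : ℝ) ^ n * L ^ (-p) := by
      rw [Real.rpow_neg hapos.le, Real.rpow_neg hLpos.le, Real.exp_neg, ← mul_inv,
        mul_comm (Real.exp ((k:ℝ) * l)) (a ^ p), ← one_div, ← div_eq_mul_inv]
      have hx : (0:ℝ) < a ^ p * Real.exp ((k:ℝ) * l) := by
        have := Real.rpow_pos_of_pos hapos p
        positivity
      have hy : (0:ℝ) < L ^ p := Real.rpow_pos_of_pos hLpos p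
      rw [div_le_div_iff₀ hx hy]
      nlinarith [key]
    calc (1 - l) ^ k * a ^ (-p) ≤ Real.exp (-((k:ℝ) * l)) * a ^ (-p) :=
          mul_le_mul_of_nonneg_right hexp2 (Real.rpow_nonneg hapos.le _)
      _ ≤ (3 * n : ℝ) ^ n * L ^ (-p) := hGoal2

lemma scalar_two (p : ℝ) (hp : 0 < p) (n : ℕ) (hn1 : 1 ≤ n) (hpn : p ≤ n)
    (k : ℕ) (hk : 2 ≤ k) (l : ℝ) (hl0 : 0 ≤ l) (hl1 : l ≤ 1) :
    (1 - l) ^ k * (l * fn p l)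
      ≤ 4 * 2 ^ p * (3 * n : ℝ) ^ n * (k : ℝ)⁻¹ * Real.log (k + 2) ^ (-p) := by
  have hk1 : 1 ≤ k := le_trans (by norm_num) hk
  have hk2 := log_k2_ge_one k hk1
  set L := Real.log (k + 2) with hL
  have hLpos : 0 < L := lt_of_lt_of_le one_pos hk2
  have hkR : (2:ℝ) ≤ (k:ℝ) := by exact_mod_cast hk
  rcases eq_or_lt_of_le hl0 with h0 | hlpos
  · rw [← h0]
    simp [fn]
    positivity
  have hlne : l ≠ 0 := ne_of_gt hlpos
  set m := k / 2 with hm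
  set k' := k - m with hk'
  have hm1 : 1 ≤ m := by omega
  have hk'1 : 1 ≤ k' := by omega
  have hsum : k = k' + m := by omega
  have hmR : (1:ℝ) ≤ (m:ℝ) := by exact_mod_cast hm1
  -- bound B : l * (1-l)^m ≤ 4 / k
  have hB : l * (1 - l) ^ m ≤ 4 * (k:ℝ)⁻¹ := by
    have h1 : 1 - l ≤ Real.exp (-l) := by
      have := Real.add_one_le_exp (-l)
      linarith
    have h2 : (1 - l) ^ m ≤ Real.exp (-((m:ℝ) * l)) := by
      calc (1 - l) ^ m ≤ Real.exp (-l) ^ m := pow_le_pow_left₀ (by linarith) h1 m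
        _ = Real.exp (-((m:ℝ) * l)) := by
            rw [← Real.exp_nat_mul]
            congr 1
            ring
    have hmlpos : (0:ℝ) < (m:ℝ) * l := by positivity
    have h3 : Real.exp (-((m:ℝ) * l)) ≤ ((m:ℝ) * l)⁻¹ := by
      rw [Real.exp_neg]
      apply inv_anti₀ hmlpos
      have := Real.add_one_le_exp ((m:ℝ) * l)
      linarith
    have h4 : l * (1 - l) ^ m ≤ l * ((m:ℝ) * l)⁻¹ := by
      calc l * (1 - l) ^ m ≤ l * Real.exp (-((m:ℝ) * l)) :=
            mul_le_mul_of_nonneg_left h2 hlpos.le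
        _ ≤ l * ((m:ℝ) * l)⁻¹ := mul_le_mul_of_nonneg_left h3 hlpos.le
    have h5 : l * ((m:ℝ) * l)⁻¹ = (m:ℝ)⁻¹ := by
      field_simp
    have h6 : (m:ℝ)⁻¹ ≤ 4 * (k:ℝ)⁻¹ := by
      have hkm : (k:ℝ) ≤ 4 * (m:ℝ) := by
        have : k ≤ 4 * m := by omega
        exact_mod_cast this
      rw [← one_div, show (4:ℝ) * (k:ℝ)⁻¹ = 4 / (k:ℝ) from (div_eq_mul_inv 4 _).symm,
        div_le_div_iff₀ (by positivity) (by positivity)]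
      linarith
    calc l * (1 - l) ^ m ≤ (m:ℝ)⁻¹ := by rw [← h5]; exact h4
      _ ≤ 4 * (k:ℝ)⁻¹ := h6
  have hA := scalar_one p hp n hn1 hpn k' hk'1 l hl0 hl1
  have hC : Real.log ((k':ℝ) + 2) ^ (-p) ≤ 2 ^ p * L ^ (-p) := by
    have hL'pos : (0:ℝ) < Real.log ((k':ℝ) + 2) :=
      lt_of_lt_of_le one_pos (log_k2_ge_one k' hk'1)
    have h1 : L / 2 ≤ Real.log ((k':ℝ) + 2) := by
      have h2 : ((k:ℝ) + 2) / 2 ≤ (k':ℝ) + 2 := by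
        have h2' : k + 2 ≤ 2 * (k' + 2) := by omega
        have h2'' : (k:ℝ) + 2 ≤ 2 * ((k':ℝ) + 2) := by exact_mod_cast h2'
        linarith
      have h3 : Real.log (((k:ℝ) + 2) / 2) ≤ Real.log ((k':ℝ) + 2) :=
        Real.log_le_log (by positivity) h2
      have h4 : Real.log (((k:ℝ) + 2) / 2) = L - Real.log 2 := by
        rw [Real.log_div (by positivity) (by norm_num)]
      have h5 : 2 * Real.log 2 ≤ L := by
        have e4 : Real.log 4 ≤ L := Real.log_le_log (by norm_num) (by linarith)
        have e5 : Real.log 4 = 2 * Real.log 2 := by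
          rw [show (4:ℝ) = 2 ^ 2 by norm_num, Real.log_pow]
          push_cast; ring
        linarith
      linarith
    have h6 : Real.log ((k':ℝ) + 2) ^ (-p) ≤ (L / 2) ^ (-p) :=
      Real.rpow_le_rpow_of_nonpos (by positivity) h1 (by linarith)
    have h7 : (L / 2) ^ (-p) = 2 ^ p * L ^ (-p) := by
      rw [Real.div_rpow hLpos.le (by norm_num : (0:ℝ) ≤ 2),
        Real.rpow_neg (show (0:ℝ) ≤ 2 by norm_num), div_eq_mul_inv, inv_inv, mul_comm]
    rw [← h7]
    exact h6
  have hfnn : 0 ≤ fn p l := fn_nonneg p l hl0 hl1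
  have e0 : (1 - l) ^ k * (l * fn p l) = ((1 - l) ^ k' * fn p l) * (l * (1 - l) ^ m) := by
    rw [hsum, pow_add]
    ring
  rw [e0]
  have hA2 : (1 - l) ^ k' * fn p l ≤ (3 * n : ℝ) ^ n * (2 ^ p * L ^ (-p)) := by
    calc (1 - l) ^ k' * fn p l ≤ (3 * n : ℝ) ^ n * Real.log ((k':ℝ) + 2) ^ (-p) := hA
      _ ≤ (3 * n : ℝ) ^ n * (2 ^ p * L ^ (-p)) :=
          mul_le_mul_of_nonneg_left hC (by positivity)
  have hBnn : 0 ≤ l * (1 - l) ^ m := mul_nonneg hlpos.le (pow_nonneg (by linarith) m)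
  have hAnn : 0 ≤ (1 - l) ^ k' * fn p l := mul_nonneg (pow_nonneg (by linarith) k') hfnn
  calc ((1 - l) ^ k' * fn p l) * (l * (1 - l) ^ m)
      ≤ ((3 * n : ℝ) ^ n * (2 ^ p * L ^ (-p))) * (4 * (k:ℝ)⁻¹) :=
        mul_le_mul hA2 hB hBnn (by positivity)
    _ = 4 * 2 ^ p * (3 * n : ℝ) ^ n * (k:ℝ)⁻¹ * L ^ (-p) := by ring


lemma fn_contOn (p : ℝ) (hp : 0 < p) : ContinuousOn (fn p) (Set.Icc (0:ℝ) 1) := by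
  have heq : Set.EqOn (fun l : ℝ => Real.log (Real.exp 1 / l) ^ (-p)) (fn p)
      (Set.Icc (0:ℝ) 1) := by
    intro l _
    by_cases h : l = 0
    · simp [fn, h, Real.log_zero, Real.zero_rpow (neg_ne_zero.mpr hp.ne')]
    · simp [fn, h]
  refine ContinuousOn.congr ?_ heq.symm
  intro l hl
  by_cases h : l = 0
  · subst h
    have main : Filter.Tendsto (fun l : ℝ => Real.log (Real.exp 1 / l) ^ (-p))
        (nhdsWithin 0 (Set.Ioi 0)) (nhds 0) := by
      apply (tendsto_rpow_neg_atTop hp).comp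
      apply Real.tendsto_log_atTop.comp
      have h1 : Filter.Tendsto (fun l : ℝ => Real.exp 1 / l)
          (nhdsWithin 0 (Set.Ioi 0)) Filter.atTop := by
        simpa [div_eq_mul_inv] using
          (tendsto_inv_nhdsGT_zero (𝕜 := ℝ)).const_mul_atTop (Real.exp_pos 1)
      exact h1
    have hval : Real.log (Real.exp 1 / (0:ℝ)) ^ (-p) = 0 := by
      rw [div_zero, Real.log_zero, Real.zero_rpow (neg_ne_zero.mpr hp.ne')]
    have hIci : ContinuousWithinAt (fun l : ℝ => Real.log (Real.exp 1 / l) ^ (-p))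
        (Set.Ici 0) 0 := by
      rw [ContinuousWithinAt, hval, show (Set.Ici (0:ℝ)) = insert 0 (Set.Ioi 0) from
        (Set.Ioi_insert (a := (0:ℝ))).symm, nhdsWithin_insert, Filter.tendsto_sup]
      constructor
      · have ht := tendsto_pure_nhds (fun l : ℝ => Real.log (Real.exp 1 / l) ^ (-p)) 0
        rwa [hval] at ht
      · exact main
    exact hIci.mono Set.Icc_subset_Ici_self
  · apply ContinuousAt.continuousWithinAt
    have hlpos : 0 < l := lt_of_le_of_ne hl.1 (Ne.symm h)
    have h1 : ContinuousAt (fun l : ℝ => Real.log (Real.exp 1 / l)) l := by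
      apply (Real.continuousAt_log (div_ne_zero (Real.exp_ne_zero 1) h)).comp
      exact continuousAt_const.div continuousAt_id h
    apply h1.rpow_const
    left
    have he : 1 < Real.exp 1 / l := by
      rw [lt_div_iff₀ hlpos]
      have h2 := Real.add_one_le_exp (1:ℝ)
      nlinarith [hl.2]
    exact (Real.log_pos he).ne'

section Op

variable {H : Type*} [NormedAddCommGroup H] [InnerProductSpace ℝ H] [CompleteSpace H]
  [ContinuousFunctionalCalculus ℝ (H →L[ℝ] H) (IsSelfAdjoint : (H →L[ℝ] H) → Prop)]

lemma spec_subset (P : H →L[ℝ] H) (hP : ‖P‖ ≤ 1)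
    (hpos : ∀ x : H, 0 ≤ (inner ℝ (P x) x : ℝ)) :
    spectrum ℝ P ⊆ Set.Icc (0:ℝ) 1 := by
  intro μ hμ
  constructor
  · by_contra hneg
    push_neg at hneg
    rw [spectrum.mem_iff] at hμ
    apply hμ
    have hc : (0:ℝ) < -μ := by linarith
    apply ContinuousLinearMap.isUnit_of_forall_le_norm_inner_map _
      (c := ⟨-μ, hc.le⟩) (by exact_mod_cast hc)
    intro x
    have happ : (algebraMap ℝ (H →L[ℝ] H) μ - P) x = μ • x - P x := by
      simp [Algebra.algebraMap_eq_smul_one]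
    rw [happ]
    have hinner : (inner ℝ (μ • x - P x) x : ℝ) = μ * ‖x‖ ^ 2 - inner ℝ (P x) x := by
      rw [inner_sub_left, real_inner_smul_left, real_inner_self_eq_norm_sq]
    rw [hinner, Real.norm_eq_abs]
    have h1 : ‖x‖ ^ 2 * (-μ) ≤ -(μ * ‖x‖ ^ 2 - inner ℝ (P x) x) := by
      nlinarith [hpos x]
    calc ‖x‖ ^ 2 * (⟨-μ, hc.le⟩ : NNReal) = ‖x‖ ^ 2 * (-μ) := by norm_num
      _ ≤ -(μ * ‖x‖ ^ 2 - inner ℝ (P x) x) := h1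
      _ ≤ |μ * ‖x‖ ^ 2 - inner ℝ (P x) x| := neg_le_abs _
  · have h1 := spectrum.subset_closedBall_norm_mul (𝕜 := ℝ) P hμ
    rw [Metric.mem_closedBall, dist_zero_right, Real.norm_eq_abs] at h1
    have h2 : ‖(1 : H →L[ℝ] H)‖ ≤ 1 := by
      rw [ContinuousLinearMap.one_def]
      exact ContinuousLinearMap.norm_id_le
    have h3 : ‖P‖ * ‖(1 : H →L[ℝ] H)‖ ≤ 1 :=
      mul_le_one₀ hP (norm_nonneg _) h2
    calc μ ≤ |μ| := le_abs_self μ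
      _ ≤ 1 := le_trans h1 h3

lemma cfc_norm_apply_le (P : H →L[ℝ] H) (hsa : IsSelfAdjoint P) (g : ℝ → ℝ)
    (hg : ContinuousOn g (spectrum ℝ P)) (c : ℝ) (hc : 0 ≤ c)
    (hgc : ∀ x ∈ spectrum ℝ P, |g x| ≤ c) (ψ : H) :
    ‖cfc g P ψ‖ ≤ c * ‖ψ‖ := by
  set A := cfc g P with hA
  have hAsa : IsSelfAdjoint A := cfc_predicate g P
  set q : ℝ → ℝ := fun x => Real.sqrt (c ^ 2 - g x ^ 2) with hq
  have hqc : ContinuousOn q (spectrum ℝ P) :=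
    Real.continuous_sqrt.comp_continuousOn (continuousOn_const.sub (hg.pow 2))
  set B := cfc q P with hB
  have hBsa : IsSelfAdjoint B := cfc_predicate q P
  have hBB : B * B = c ^ 2 • (1 : H →L[ℝ] H) - A * A := by
    rw [hB, ← cfc_mul q q P hqc hqc]
    have h1 : cfc (fun x => q x * q x) P = cfc (fun x => c ^ 2 - g x ^ 2) P := by
      apply cfc_congr
      intro x hx
      have h2 := hgc x hx
      have h3 : g x ^ 2 ≤ c ^ 2 := by
        have := abs_nonneg (g x)
        nlinarith [le_abs_self (g x), neg_abs_le (g x)]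
      simp only [hq]
      exact Real.mul_self_sqrt (by linarith)
    rw [h1, cfc_sub (fun _ => c ^ 2) (fun x => g x ^ 2) P continuousOn_const (hg.pow 2),
      cfc_const (c ^ 2) P hsa, cfc_pow g 2 P hg hsa, Algebra.algebraMap_eq_smul_one, ← hA, pow_two A]
  have key : ‖A ψ‖ ^ 2 ≤ (c * ‖ψ‖) ^ 2 := by
    have hsymA := ContinuousLinearMap.isSelfAdjoint_iff_isSymmetric.mp hAsa
    have hsymB := ContinuousLinearMap.isSelfAdjoint_iff_isSymmetric.mp hBsa
    have h1 : ‖A ψ‖ ^ 2 = (inner ℝ (A (A ψ)) ψ : ℝ) := by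
      rw [← real_inner_self_eq_norm_sq]
      have h1' := hsymA (A ψ) ψ
      simp only [ContinuousLinearMap.coe_coe] at h1'
      exact h1'.symm
    have h2 : (0:ℝ) ≤ inner ℝ (B (B ψ)) ψ := by
      have h2' := hsymB (B ψ) ψ
      simp only [ContinuousLinearMap.coe_coe] at h2'
      rw [h2']
      exact real_inner_self_nonneg
    have h3 : B (B ψ) = c ^ 2 • ψ - A (A ψ) := by
      have h4 := congrArg (fun T : H →L[ℝ] H => T ψ) hBB
      simpa [ContinuousLinearMap.mul_apply] using h4
    rw [h3, inner_sub_left, real_inner_smul_left, real_inner_self_eq_norm_sq] at h2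
    nlinarith [h1]
  have h5 := Real.sqrt_le_sqrt key
  rwa [Real.sqrt_sq (norm_nonneg _), Real.sqrt_sq (mul_nonneg hc (norm_nonneg _))] at h5

end Op

end LogSourceAux

/-- **Lemma A.2.** Let `H` be a real Hilbert space, `p > 0`, and `P` a self-adjoint
positive bounded linear operator with `‖P‖ ≤ 1`. With `f(λ) = (ln(e/λ))^{-p}` for
`λ ∈ (0,1]`, `f(0) = 0`, and `e₁ := f(P) ψ` (continuous functional calculus), there is a
constant `C > 0` independent of `k` and `ψ` such that for every `k ≥ 2`:
`‖(I - P)^k e₁‖ ≤ C ‖ψ‖ (ln (k+2))^{-p}` and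
`‖(I - P)^k P e₁‖ ≤ C ‖ψ‖ k⁻¹ (ln (k+2))^{-p}`. -/
theorem log_source_decay_of_powers
    {H : Type*} [NormedAddCommGroup H] [InnerProductSpace ℝ H] [CompleteSpace H]
    [ContinuousFunctionalCalculus ℝ (H →L[ℝ] H) (IsSelfAdjoint : (H →L[ℝ] H) → Prop)]
    (P : H →L[ℝ] H) (hP : ‖P‖ ≤ 1) (hsa : IsSelfAdjoint P)
    (hpos : ∀ x : H, 0 ≤ (inner ℝ (P x) x : ℝ))
    (p : ℝ) (hp : 0 < p) :
    ∃ C > (0 : ℝ), ∀ ψ : H, ∀ k : ℕ, 2 ≤ k →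
      ‖((1 - P) ^ k)
          ((cfc (fun l : ℝ => if l = 0 then 0 else (Real.log (Real.exp 1 / l)) ^ (-p)) P) ψ)‖
        ≤ C * ‖ψ‖ * (Real.log (k + 2)) ^ (-p) ∧
      ‖((1 - P) ^ k)
          (P ((cfc (fun l : ℝ => if l = 0 then 0 else (Real.log (Real.exp 1 / l)) ^ (-p)) P) ψ))‖
        ≤ C * ‖ψ‖ * (k : ℝ)⁻¹ * (Real.log (k + 2)) ^ (-p) := by
  classical
  set f : ℝ → ℝ := fun l : ℝ => if l = 0 then 0 else (Real.log (Real.exp 1 / l)) ^ (-p)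
    with hfdef
  have hfn : LogSourceAux.fn p = f := rfl
  set n := max 1 ⌈p⌉₊ with hn
  have hn1 : 1 ≤ n := le_max_left _ _
  have hpn : p ≤ (n:ℝ) :=
    le_trans (Nat.le_ceil p) (by exact_mod_cast le_max_right 1 ⌈p⌉₊)
  set C1 : ℝ := (3 * n : ℝ) ^ n with hC1
  have hC1pos : 0 < C1 := by positivity
  have h2p : (1:ℝ) ≤ 2 ^ p := by
    calc (1:ℝ) = 2 ^ (0:ℝ) := (Real.rpow_zero 2).symm
      _ ≤ 2 ^ p := Real.rpow_le_rpow_of_exponent_le one_le_two hp.le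
  refine ⟨4 * 2 ^ p * C1, by positivity, ?_⟩
  intro ψ k hk
  have hk1 : 1 ≤ k := le_trans (by norm_num) hk
  have hkR : (1:ℝ) ≤ (k:ℝ) := by exact_mod_cast hk1
  have hspec : spectrum ℝ P ⊆ Set.Icc (0:ℝ) 1 := LogSourceAux.spec_subset P hP hpos
  have hcont : ContinuousOn f (spectrum ℝ P) := by
    have h := (LogSourceAux.fn_contOn p hp).mono hspec
    rwa [hfn] at h
  have hL1 : (1:ℝ) ≤ Real.log (k + 2) := LogSourceAux.log_k2_ge_one k hk1
  have hLpos : (0:ℝ) < Real.log (k + 2) := lt_of_lt_of_le one_pos hL1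
  have hLp : (0:ℝ) ≤ Real.log (k + 2) ^ (-p) := Real.rpow_nonneg hLpos.le _
  have hone : ContinuousOn (fun l : ℝ => (1 - l) ^ k) (spectrum ℝ P) :=
    (continuousOn_const.sub (continuousOn_id' _)).pow k
  have hpow : cfc (fun l : ℝ => (1 - l) ^ k) P = (1 - P) ^ k := by
    rw [cfc_pow (fun l : ℝ => 1 - l) k P
      (continuousOn_const.sub (continuousOn_id' _)) hsa]
    congr 1
    rw [cfc_sub (fun _ : ℝ => (1:ℝ)) (fun l : ℝ => l) P continuousOn_const
      (continuousOn_id' _), cfc_const_one ℝ P hsa, cfc_id' ℝ P hsa]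
  constructor
  · have hid : cfc (fun l : ℝ => (1 - l) ^ k * f l) P = (1 - P) ^ k * cfc f P := by
      rw [cfc_mul (fun l : ℝ => (1 - l) ^ k) f P hone hcont, hpow]
    have happly : ((1 - P) ^ k) ((cfc f P) ψ)
        = cfc (fun l : ℝ => (1 - l) ^ k * f l) P ψ := by
      rw [hid, ContinuousLinearMap.mul_apply]
    rw [happly]
    have hbound : ∀ x ∈ spectrum ℝ P,
        |(1 - x) ^ k * f x| ≤ C1 * Real.log (k + 2) ^ (-p) := by
      intro x hx
      obtain ⟨hx0, hx1⟩ := hspec hx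
      have h1 := LogSourceAux.scalar_one p hp n hn1 hpn k hk1 x hx0 hx1
      rw [hfn] at h1
      have h2 : 0 ≤ (1 - x) ^ k * f x := by
        apply mul_nonneg (pow_nonneg (by linarith) k)
        rw [← hfn]
        exact LogSourceAux.fn_nonneg p x hx0 hx1
      rw [abs_of_nonneg h2]
      exact h1
    have hnorm := LogSourceAux.cfc_norm_apply_le P hsa (fun l : ℝ => (1 - l) ^ k * f l)
      (hone.mul hcont) (C1 * Real.log (k + 2) ^ (-p)) (by positivity) hbound ψ
    calc ‖cfc (fun l : ℝ => (1 - l) ^ k * f l) P ψ‖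
        ≤ (C1 * Real.log (k + 2) ^ (-p)) * ‖ψ‖ := hnorm
      _ ≤ 4 * 2 ^ p * C1 * ‖ψ‖ * Real.log (k + 2) ^ (-p) := by
          nlinarith [mul_nonneg (mul_nonneg hC1pos.le (norm_nonneg ψ)) hLp, h2p]
  · have hidl : cfc (fun l : ℝ => l * f l) P = P * cfc f P := by
      rw [cfc_mul (fun l : ℝ => l) f P (continuousOn_id' _) hcont, cfc_id' ℝ P hsa]
    have hid2 : cfc (fun l : ℝ => (1 - l) ^ k * (l * f l)) P
        = (1 - P) ^ k * (P * cfc f P) := by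
      rw [cfc_mul (fun l : ℝ => (1 - l) ^ k) (fun l : ℝ => l * f l) P hone
        ((continuousOn_id' _).mul hcont), hidl, hpow]
    have happly2 : ((1 - P) ^ k) (P ((cfc f P) ψ))
        = cfc (fun l : ℝ => (1 - l) ^ k * (l * f l)) P ψ := by
      rw [hid2, ContinuousLinearMap.mul_apply, ContinuousLinearMap.mul_apply]
    rw [happly2]
    have hbound2 : ∀ x ∈ spectrum ℝ P,
        |(1 - x) ^ k * (x * f x)| ≤ 4 * 2 ^ p * C1 * (k:ℝ)⁻¹ * Real.log (k + 2) ^ (-p) := by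
      intro x hx
      obtain ⟨hx0, hx1⟩ := hspec hx
      have h1 := LogSourceAux.scalar_two p hp n hn1 hpn k hk x hx0 hx1
      rw [hfn] at h1
      have h2 : 0 ≤ (1 - x) ^ k * (x * f x) := by
        apply mul_nonneg (pow_nonneg (by linarith) k)
        apply mul_nonneg hx0
        rw [← hfn]
        exact LogSourceAux.fn_nonneg p x hx0 hx1
      rw [abs_of_nonneg h2]
      exact h1
    have hnorm2 := LogSourceAux.cfc_norm_apply_le P hsa
      (fun l : ℝ => (1 - l) ^ k * (l * f l)) (hone.mul ((continuousOn_id' _).mul hcont))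
      (4 * 2 ^ p * C1 * (k:ℝ)⁻¹ * Real.log (k + 2) ^ (-p)) (by positivity) hbound2 ψ
    calc ‖cfc (fun l : ℝ => (1 - l) ^ k * (l * f l)) P ψ‖
        ≤ (4 * 2 ^ p * C1 * (k:ℝ)⁻¹ * Real.log (k + 2) ^ (-p)) * ‖ψ‖ := hnorm2
      _ = 4 * 2 ^ p * C1 * ‖ψ‖ * (k:ℝ)⁻¹ * Real.log (k + 2) ^ (-p) := by ring
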